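/- (Remark 2.) Suppose Q is B-geometrically ergodic, B ⊂ L³(ν) and ξ ∈ B. Let (B₂, ‖·‖₂) be a Banach space of measurable functions containing all products g² for g ∈ B. If there exists A > 0 such that ν(|f|^{3/2})^{2/3} ≤ A‖f‖₂ for all f ∈ B₂, and if Q is B₂-geometrically ergodic, then ψ ∈ B₂, ν(ψ) = 0, and Σ_{p≥0} ν(|Qᵖψ|^{3/2})^{2/3} < +∞ (i.e. condition (H2) holds). -/

import Mathlib

open MeasureTheory ProbabilityTheory Filter
open scoped ENNReal NNReal

lemma my_bind_eq_map_snd {E : Type*} [MeasurableSpace E] (ν : Measure E)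
    [IsProbabilityMeasure ν] (Q : Kernel E E) [IsMarkovKernel Q] :
    ν.bind (fun x => Q x) = (ν ⊗ₘ Q).map Prod.snd := by
  ext s hs
  rw [Measure.bind_apply hs (Q.measurable.aemeasurable), Measure.map_apply measurable_snd hs,
    Measure.compProd_apply (measurable_snd hs)]
  rfl

lemma my_kernel_integral {E : Type*} [MeasurableSpace E] (ν : Measure E)
    [IsProbabilityMeasure ν] (Q : Kernel E E) [IsMarkovKernel Q]
    (hinv : ν.bind (fun x => Q x) = ν)
    {f : E → ℝ} (hfm : Measurable f) (hfi : Integrable f ν) :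
    Integrable (fun x => ∫ y, f y ∂(Q x)) ν ∧
      ∫ x, ∫ y, f y ∂(Q x) ∂ν = ∫ y, f y ∂ν := by
  have hb : ν = (ν ⊗ₘ Q).map Prod.snd := by rw [← my_bind_eq_map_snd ν Q, hinv]
  have hsm : AEStronglyMeasurable f ((ν ⊗ₘ Q).map Prod.snd) :=
    hfm.stronglyMeasurable.aestronglyMeasurable
  have hfs : Integrable (fun p : E × E => f p.2) (ν ⊗ₘ Q) := by
    have := (integrable_map_measure hsm measurable_snd.aemeasurable).1 (hb ▸ hfi)
    exact this
  constructor
  · obtain ⟨hae, hnorm⟩ := (Measure.integrable_compProd_iff hfs.aestronglyMeasurable).1 hfs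
    refine hnorm.mono' ?_ ?_
    · exact (StronglyMeasurable.integral_kernel_prod_right'
        (κ := Q) (hfm.comp measurable_snd).stronglyMeasurable).aestronglyMeasurable
    · filter_upwards with x
      exact norm_integral_le_integral_norm _
  · symm
    calc ∫ y, f y ∂ν = ∫ y, f y ∂((ν ⊗ₘ Q).map Prod.snd) := by rw [← hb]
      _ = ∫ p : E × E, f p.2 ∂(ν ⊗ₘ Q) := integral_map measurable_snd.aemeasurable hsm
      _ = ∫ x, ∫ y, f y ∂(Q x) ∂ν := Measure.integral_compProd hfs

/-- Pointwise action of the `n`-th iterate of a kernel on a real-valued function. -/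
noncomputable def kIterR {E : Type*} [MeasurableSpace E] (Q : Kernel E E) :
    ℕ → (E → ℝ) → E → ℝ
  | 0, f => f
  | (n+1), f => fun x => ∫ y, kIterR Q n f y ∂(Q x)

theorem remark_2
    {E : Type*} [MeasurableSpace E]
    (Q : Kernel E E) [IsMarkovKernel Q]
    (ν : Measure E) [IsProbabilityMeasure ν]
    (hinv : ν.bind (fun x => Q x) = ν)
    (ξ : E → ℝ) (hξmeas : Measurable ξ) (hξint : Integrable ξ ν)
    (hξcent : ∫ x, ξ x ∂ν = 0)
    -- the Banach space B of measurable functions E → ℂ :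
    (B : Type*) [NormedAddCommGroup B] [NormedSpace ℂ B] [CompleteSpace B]
    (ι : B →ₗ[ℂ] (E → ℂ)) (hιinj : Function.Injective ι)
    (hιmeas : ∀ f : B, Measurable (ι f))
    -- B ⊂ L³(ν) :
    (hL3 : ∀ f : B, MemLp (ι f) 3 ν)
    -- 1 ∈ B, ν ∈ B' :
    (one : B) (hone : ι one = fun _ => 1)
    (hν' : ∃ Cν : ℝ, ∀ f : B, ‖∫ x, ι f x ∂ν‖ ≤ Cν * ‖f‖)
    -- Q ∈ L(B) :
    (QB : B →L[ℂ] B) (hQB : ∀ (f : B) (x : E), ι (QB f) x = ∫ y, ι f y ∂(Q x))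
    -- ξ ∈ B :
    (ξB : B) (hξB : ι ξB = fun x => (ξ x : ℂ))
    -- Q is B-geometrically ergodic :
    (H1 : ∃ (κ₀ C : ℝ), κ₀ < 1 ∧ 0 ≤ C ∧ ∀ n : ℕ, 1 ≤ n → ∀ f : B,
      ‖(QB ^ n) f - (∫ x, ι f x ∂ν) • one‖ ≤ C * κ₀ ^ n * ‖f‖)
    -- ξ̆ = ∑_{n≥0} Qⁿξ (sum in B, with pointwise realization ξbr) :
    (xbr : B) (hxbr : HasSum (fun n : ℕ => (QB ^ n) ξB) xbr)
    (ξbr : E → ℝ) (hξbr : ι xbr = fun x => (ξbr x : ℂ))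
    -- σ² = ν(ξ̆²) − ν((Qξ̆)²) and ψ = Q(ξ̆²) − (Qξ̆)² − σ²·1 :
    (σ2 : ℝ)
    (hσ2 : σ2 = ∫ x, ξbr x ^ 2 ∂ν - ∫ x, (∫ y, ξbr y ∂(Q x)) ^ 2 ∂ν)
    (ψ : E → ℝ)
    (hψ : ∀ x, ψ x = (∫ y, ξbr y ^ 2 ∂(Q x)) - (∫ y, ξbr y ∂(Q x)) ^ 2 - σ2)
    -- the Banach space B₂ of measurable functions E → ℂ :
    (B2 : Type*) [NormedAddCommGroup B2] [NormedSpace ℂ B2] [CompleteSpace B2]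
    (ι₂ : B2 →ₗ[ℂ] (E → ℂ)) (hι₂inj : Function.Injective ι₂)
    (hι₂meas : ∀ f : B2, Measurable (ι₂ f))
    -- B₂ contains the products g², g ∈ B :
    (hsq : ∀ g : B, ∃ h : B2, ι₂ h = fun x => (ι g x) ^ 2)
    -- 1 ∈ B₂, ν ∈ B₂' :
    (one₂ : B2) (hone₂ : ι₂ one₂ = fun _ => 1)
    (hν₂' : ∃ Cν : ℝ, ∀ f : B2, ‖∫ x, ι₂ f x ∂ν‖ ≤ Cν * ‖f‖)
    -- ν(|f|^{3/2})^{2/3} ≤ A ‖f‖₂ on B₂ :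
    (hA : ∃ A : ℝ, 0 < A ∧ ∀ f : B2,
      (∫ x, ‖ι₂ f x‖ ^ ((3:ℝ)/2) ∂ν) ^ ((2:ℝ)/3) ≤ A * ‖f‖)
    -- Q ∈ L(B₂) and Q is B₂-geometrically ergodic :
    (QB₂ : B2 →L[ℂ] B2) (hQB₂ : ∀ (f : B2) (x : E), ι₂ (QB₂ f) x = ∫ y, ι₂ f y ∂(Q x))
    (H1₂ : ∃ (κ₀ C : ℝ), κ₀ < 1 ∧ 0 ≤ C ∧ ∀ n : ℕ, 1 ≤ n → ∀ f : B2,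
      ‖(QB₂ ^ n) f - (∫ x, ι₂ f x ∂ν) • one₂‖ ≤ C * κ₀ ^ n * ‖f‖) :
    -- conclusion : ψ ∈ B₂, ν(ψ) = 0, and (H2) holds
    (∃ ψ₂ : B2, ι₂ ψ₂ = fun x => (ψ x : ℂ)) ∧
    (∫ x, ψ x ∂ν = 0) ∧
    Summable (fun p : ℕ => (∫ x, |kIterR Q p ψ x| ^ ((3:ℝ)/2) ∂ν) ^ ((2:ℝ)/3)) := by
  classical
  obtain ⟨h₁, hh₁⟩ := hsq xbr
  obtain ⟨h₂, hh₂⟩ := hsq (QB xbr)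
  set ψ₂ : B2 := QB₂ h₁ - h₂ - (σ2 : ℂ) • one₂ with hψ₂def
  -- pointwise identification of ψ₂ with ψ
  have hQxbr_pt : ∀ x, ι (QB xbr) x = ((∫ y, ξbr y ∂(Q x) : ℝ) : ℂ) := by
    intro x
    rw [hQB]
    calc ∫ y, ι xbr y ∂(Q x) = ∫ y, ((ξbr y : ℝ) : ℂ) ∂(Q x) := by
          refine integral_congr_ae (Eventually.of_forall fun y => ?_)
          rw [hξbr]
      _ = _ := integral_ofReal
  have hψpt : ∀ x, ι₂ ψ₂ x = (ψ x : ℂ) := by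
    intro x
    have e1 : ι₂ (QB₂ h₁) x = ((∫ y, ξbr y ^ 2 ∂(Q x) : ℝ) : ℂ) := by
      rw [hQB₂]
      calc ∫ y, ι₂ h₁ y ∂(Q x) = ∫ y, ((ξbr y ^ 2 : ℝ) : ℂ) ∂(Q x) := by
            refine integral_congr_ae (Eventually.of_forall fun y => ?_)
            simp only [hh₁, hξbr]
            push_cast
            ring
        _ = _ := integral_ofReal
    have e2 : ι₂ h₂ x = (((∫ y, ξbr y ∂(Q x)) ^ 2 : ℝ) : ℂ) := by
      simp only [hh₂]
      rw [hQxbr_pt x]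
      push_cast
      ring
    have e3 : ι₂ ((σ2 : ℂ) • one₂) x = (σ2 : ℂ) := by
      rw [LinearMap.map_smul]
      simp [hone₂]
    calc ι₂ ψ₂ x = ι₂ (QB₂ h₁) x - ι₂ h₂ x - ι₂ ((σ2 : ℂ) • one₂) x := by
          simp [hψ₂def, map_sub]
      _ = (ψ x : ℂ) := by
          rw [e1, e2, e3, hψ x]
          push_cast
          ring
  -- real-valued membership facts
  have hξbr_eq : (fun x => (Complex.reCLM : ℂ →L[ℝ] ℝ) (ι xbr x)) = ξbr := by
    funext x
    simp [hξbr]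
  have hξbrmem : MemLp ξbr 3 ν := by
    have := (Complex.reCLM : ℂ →L[ℝ] ℝ).comp_memLp' (hL3 xbr)
    rwa [show (⇑(Complex.reCLM : ℂ →L[ℝ] ℝ) ∘ ι xbr) = ξbr from hξbr_eq] at this
  have hξbrmeas : Measurable ξbr := by
    have : Measurable fun x => (Complex.reCLM : ℂ →L[ℝ] ℝ) (ι xbr x) :=
      Complex.measurable_re.comp (hιmeas xbr)
    rwa [hξbr_eq] at this
  have hξbr2int : Integrable (fun x => ξbr x ^ 2) ν :=
    (hξbrmem.mono_exponent (by norm_num : (2:ℝ≥0∞) ≤ 3)).integrable_sq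
  have hQmem : MemLp (fun x => ∫ y, ξbr y ∂(Q x)) 3 ν := by
    have h := (Complex.reCLM : ℂ →L[ℝ] ℝ).comp_memLp' (hL3 (QB xbr))
    have he : (⇑(Complex.reCLM : ℂ →L[ℝ] ℝ) ∘ ι (QB xbr)) = fun x => ∫ y, ξbr y ∂(Q x) := by
      funext x
      simp [Function.comp, hQxbr_pt x]
    rwa [he] at h
  have hhint : Integrable (fun x => (∫ y, ξbr y ∂(Q x)) ^ 2) ν :=
    (hQmem.mono_exponent (by norm_num : (2:ℝ≥0∞) ≤ 3)).integrable_sq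
  obtain ⟨hgint, hgeq⟩ := my_kernel_integral ν Q hinv (hξbrmeas.pow_const 2) hξbr2int
  -- ν(ψ) = 0
  have hψfun : ψ = fun x => (∫ y, ξbr y ^ 2 ∂(Q x)) - (∫ y, ξbr y ∂(Q x)) ^ 2 - σ2 :=
    funext hψ
  have hψint0 : ∫ x, ψ x ∂ν = 0 := by
    have hsub : Integrable (fun x => (∫ y, ξbr y ^ 2 ∂(Q x)) - (∫ y, ξbr y ∂(Q x)) ^ 2) ν :=
      hgint.sub hhint
    have e2 : ∫ x, ((∫ y, ξbr y ^ 2 ∂(Q x)) - (∫ y, ξbr y ∂(Q x)) ^ 2) ∂ν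
        = (∫ x, ∫ y, ξbr y ^ 2 ∂(Q x) ∂ν) - ∫ x, (∫ y, ξbr y ∂(Q x)) ^ 2 ∂ν :=
      integral_sub hgint hhint
    have e1 : ∫ x, ψ x ∂ν
        = (∫ x, ((∫ y, ξbr y ^ 2 ∂(Q x)) - (∫ y, ξbr y ∂(Q x)) ^ 2) ∂ν) - ∫ _x : E, (σ2:ℝ) ∂ν :=
      (integral_congr_ae (Eventually.of_forall fun x => by rw [hψ x])).trans
        (integral_sub hsub (integrable_const σ2))
    rw [e1, e2, integral_const, hgeq, hσ2]
    simp [measure_univ]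
  -- zero mean of ψ₂ in ℂ
  have hν0 : ∫ x, ι₂ ψ₂ x ∂ν = 0 := by
    calc ∫ x, ι₂ ψ₂ x ∂ν = ∫ x, ((ψ x : ℝ) : ℂ) ∂ν :=
          integral_congr_ae (Eventually.of_forall fun x => hψpt x)
      _ = ((∫ x, ψ x ∂ν : ℝ) : ℂ) := integral_ofReal
      _ = 0 := by rw [hψint0]; norm_num
  -- identify iterates
  have hpt : ∀ (p : ℕ) (x : E), ι₂ ((QB₂ ^ p) ψ₂) x = ((kIterR Q p ψ x : ℝ) : ℂ) := by
    intro p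
    induction p with
    | zero =>
      intro x
      simpa [kIterR] using hψpt x
    | succ n ih =>
      intro x
      have hp : (QB₂ ^ (n+1)) ψ₂ = QB₂ ((QB₂ ^ n) ψ₂) := by
        rw [pow_succ']
        rfl
      rw [hp, hQB₂]
      calc ∫ y, ι₂ ((QB₂ ^ n) ψ₂) y ∂(Q x)
          = ∫ y, ((kIterR Q n ψ y : ℝ) : ℂ) ∂(Q x) :=
            integral_congr_ae (Eventually.of_forall fun y => ih y)
        _ = ((kIterR Q (n+1) ψ x : ℝ) : ℂ) := by
            simp only [kIterR]
            exact integral_ofReal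
  refine ⟨⟨ψ₂, funext hψpt⟩, hψint0, ?_⟩
  -- rewrite the summand
  have htarget : (fun p : ℕ => (∫ x, |kIterR Q p ψ x| ^ ((3:ℝ)/2) ∂ν) ^ ((2:ℝ)/3))
      = fun p : ℕ => (∫ x, ‖ι₂ ((QB₂ ^ p) ψ₂) x‖ ^ ((3:ℝ)/2) ∂ν) ^ ((2:ℝ)/3) := by
    funext p
    congr 1
    refine integral_congr_ae (Eventually.of_forall fun x => ?_)
    show |kIterR Q p ψ x| ^ ((3:ℝ)/2) = ‖ι₂ ((QB₂ ^ p) ψ₂) x‖ ^ ((3:ℝ)/2)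
    rw [hpt p x, Complex.norm_real, Real.norm_eq_abs]
  rw [htarget]
  set s : ℕ → ℝ := fun p => (∫ x, ‖ι₂ ((QB₂ ^ p) ψ₂) x‖ ^ ((3:ℝ)/2) ∂ν) ^ ((2:ℝ)/3) with hsdef
  obtain ⟨A, hApos, hAle⟩ := hA
  obtain ⟨κ₀, C, hκ₀, hC, hH⟩ := H1₂
  have key : ∀ p : ℕ, 1 ≤ p → ‖(QB₂ ^ p) ψ₂‖ ≤ C * κ₀ ^ p * ‖ψ₂‖ := by
    intro p hp
    have := hH p hp ψ₂
    rwa [hν0, zero_smul, sub_zero] at this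
  have hs_nonneg : ∀ p, 0 ≤ s p := fun p =>
    Real.rpow_nonneg (integral_nonneg fun x => Real.rpow_nonneg (norm_nonneg _) _) _
  have hs_le : ∀ p, s p ≤ A * ‖(QB₂ ^ p) ψ₂‖ := fun p => hAle _
  rcases le_or_gt 1 |κ₀| with hdeg | hlt
  · -- degenerate case : κ₀ ≤ -1, everything vanishes from p = 1 on
    have hκneg : κ₀ ≤ -1 := by
      rcases le_abs.mp hdeg with h | h
      · linarith
      · linarith
    have h1 : QB₂ ψ₂ = 0 := by
      have hk := key 1 le_rfl
      have hneg : C * κ₀ ^ 1 * ‖ψ₂‖ ≤ 0 := by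
        have hκ0 : κ₀ ^ 1 ≤ 0 := by rw [pow_one]; linarith
        exact mul_nonpos_of_nonpos_of_nonneg (mul_nonpos_of_nonneg_of_nonpos hC hκ0)
          (norm_nonneg _)
      have hle : ‖(QB₂ ^ 1) ψ₂‖ ≤ 0 := hk.trans hneg
      have := norm_le_zero_iff.mp hle
      rwa [pow_one] at this
    have hz : ∀ p : ℕ, (QB₂ ^ (p + 1)) ψ₂ = 0 := by
      intro p
      have hps : (QB₂ ^ (p + 1)) ψ₂ = (QB₂ ^ p) (QB₂ ψ₂) := by
        rw [pow_succ]; rfl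
      rw [hps, h1, map_zero]
    have hz' : (fun p : ℕ => s (p + 1)) = fun _ => 0 := by
      funext p
      simp only [hsdef, hz p, map_zero, Pi.zero_apply, norm_zero]
      rw [Real.zero_rpow (by norm_num), integral_zero, Real.zero_rpow (by norm_num)]
    exact (summable_nat_add_iff 1).1 (by rw [hz']; exact summable_zero)
  · -- main case : |κ₀| < 1
    have hgeo : Summable (fun p : ℕ => A * C * ‖ψ₂‖ * |κ₀| ^ p) :=
      (summable_geometric_of_lt_one (abs_nonneg _) hlt).mul_left _
    refine (summable_nat_add_iff 1).1
      (Summable.of_nonneg_of_le (fun p => hs_nonneg _) (fun p => ?_)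
        ((summable_nat_add_iff 1).2 hgeo))
    have habs : κ₀ ^ (p + 1) ≤ |κ₀| ^ (p + 1) := by
      calc κ₀ ^ (p+1) ≤ |κ₀ ^ (p+1)| := le_abs_self _
        _ = |κ₀| ^ (p+1) := abs_pow _ _
    calc s (p + 1) ≤ A * ‖(QB₂ ^ (p+1)) ψ₂‖ := hs_le _
      _ ≤ A * (C * κ₀ ^ (p+1) * ‖ψ₂‖) :=
          mul_le_mul_of_nonneg_left (key _ (by omega)) hApos.le
      _ = (A * C * ‖ψ₂‖) * κ₀ ^ (p+1) := by ring
      _ ≤ (A * C * ‖ψ₂‖) * |κ₀| ^ (p+1) := by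
          refine mul_le_mul_of_nonneg_left habs ?_
          positivity
      _ = A * C * ‖ψ₂‖ * |κ₀| ^ (p+1) := by ring
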